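/- The function ψ : ℝ → ℝ defined by ψ(x) = sinh(x)/x for x ≠ 0 and ψ(0) = 1 is analytic and satisfies ψ(x) = Σ_{n=0}^∞ x^{2n}/(2n+1)! for all x ∈ ℝ; moreover for every k ∈ ℕ₀ and every x > 0 the k-th derivative satisfies |ψ^{(k)}(x)| ≤ e^x/(k+1). -/

import Mathlib

open Real

/-- `ψ(x) = sinh(x)/x` for `x ≠ 0`, `ψ(0) = 1`. -/
noncomputable def psi (x : ℝ) : ℝ := if x = 0 then 1 else Real.sinh x / x

namespace PsiAux

open FormalMultilinearSeries
open scoped NNReal ENNReal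

/-- Coefficients of the power series of `psi`. -/
noncomputable def c : ℕ → ℝ := fun n => if Even n then (((n+1).factorial : ℝ))⁻¹ else 0

lemma abs_c_le (n : ℕ) : |c n| ≤ ((n+1).factorial : ℝ)⁻¹ := by
  unfold c
  split_ifs with h
  · rw [abs_of_nonneg (by positivity)]
  · simp only [abs_zero]
    positivity

lemma hasSum_exp (x : ℝ) : HasSum (fun n => x ^ n / (n.factorial : ℝ)) (Real.exp x) := by
  rw [Real.exp_eq_exp_ℝ]
  have := NormedSpace.exp_series_hasSum_exp' (𝕂 := ℝ) x
  simpa [smul_eq_mul, div_eq_inv_mul] using this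

lemma hasSum_psi (y : ℝ) : HasSum (fun n => c n * y ^ n) (psi y) := by
  rcases eq_or_ne y 0 with rfl | hy
  · have h0 : ∀ n, n ≠ 0 → c n * (0:ℝ) ^ n = 0 := by
      intro n hn
      rw [zero_pow hn, mul_zero]
    have := hasSum_single (f := fun n => c n * (0:ℝ) ^ n) 0 (fun b hb => h0 b hb)
    simpa [psi, c] using this
  · set f : ℕ → ℝ := fun n => (y ^ n / n.factorial - (-y) ^ n / n.factorial) / 2 with hf
    have hs : HasSum f (Real.sinh y) := by
      have := ((hasSum_exp y).sub (hasSum_exp (-y))).div_const 2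
      simpa [hf, Real.sinh_eq, sub_div] using this
    have hs1 : HasSum (fun n => f (n + 1)) (Real.sinh y) := by
      rw [hasSum_nat_add_iff 1]
      simpa [hf] using hs
    have hs2 : HasSum (fun n => f (n + 1) / y) (Real.sinh y / y) := hs1.div_const y
    have hpsi : psi y = Real.sinh y / y := by simp [psi, hy]
    rw [hpsi]
    convert hs2 using 1
    funext n
    rcases Nat.even_or_odd n with he | ho
    · have hodd : Odd (n + 1) := Even.add_one he
      have : (-y) ^ (n + 1) = -(y ^ (n + 1)) := hodd.neg_pow y
      simp only [hf, this, sub_neg_eq_add, c, if_pos he]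
      rw [pow_succ]
      field_simp
      ring
    · have heven : Even (n + 1) := Odd.add_one ho
      have : (-y) ^ (n + 1) = y ^ (n + 1) := heven.neg_pow y
      simp [hf, this, c, Nat.not_even_iff_odd.mpr ho]

/-- The formal power series for `psi`. -/
noncomputable def p : FormalMultilinearSeries ℝ ℝ ℝ := ofScalars ℝ c

lemma norm_p (n : ℕ) : ‖p n‖ = |c n| := by
  exact (ofScalars_norm (c := c) (E := ℝ) (n := n)).trans (Real.norm_eq_abs _)

lemma radius_top : p.radius = ⊤ := by
  apply ENNReal.eq_top_of_forall_nnreal_le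
  intro r
  apply FormalMultilinearSeries.le_radius_of_summable
  refine Summable.of_nonneg_of_le (fun n => by positivity) (fun n => ?_)
    (Real.summable_pow_div_factorial r)
  · 
    rw [norm_p]
    have h1 : |c n| ≤ ((n+1).factorial : ℝ)⁻¹ := abs_c_le n
    have h2 : ((n+1).factorial : ℝ)⁻¹ ≤ ((n).factorial : ℝ)⁻¹ := by
      apply inv_anti₀ (by positivity)
      exact_mod_cast Nat.factorial_le (Nat.le_succ n)
    have h3 : (0:ℝ) ≤ (r:ℝ) ^ n := by positivity
    calc |c n| * (r:ℝ) ^ n ≤ ((n).factorial : ℝ)⁻¹ * (r:ℝ) ^ n :=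
          mul_le_mul_of_nonneg_right (h1.trans h2) h3
      _ = (r : ℝ) ^ n / n.factorial := by ring

lemma hfp : HasFPowerSeriesOnBall psi p 0 ⊤ where
  r_le := by rw [radius_top]
  r_pos := ENNReal.zero_lt_top
  hasSum := by
    intro y _
    simpa only [p, ofScalars_apply_eq, smul_eq_mul, zero_add] using hasSum_psi y

lemma analytic (x : ℝ) : AnalyticAt ℝ psi x :=
  hfp.analyticAt_of_mem (by simp)

lemma part2 (x : ℝ) : psi x = ∑' n : ℕ, x ^ (2*n) / ((2*n+1).factorial : ℝ) := by
  have h := hasSum_psi x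
  have hinj : Function.Injective (fun n : ℕ => 2 * n) := fun a b hab => by dsimp at hab; omega
  have h0 : ∀ m ∉ Set.range (fun n : ℕ => 2 * n), c m * x ^ m = 0 := by
    intro m hm
    have : ¬ Even m := by
      intro hev
      obtain ⟨r, hr⟩ := hev
      exact hm ⟨r, by dsimp; omega⟩
    simp [c, this]
  have h2 := (hinj.hasSum_iff h0).mpr h
  rw [← h2.tsum_eq]
  apply tsum_congr
  intro n
  have : Even (2 * n) := even_two_mul n
  simp only [Function.comp_apply, c, if_pos this]
  rw [div_eq_inv_mul, mul_comm]

lemma card_subtype (k l : ℕ) :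
    Fintype.card { s : Finset (Fin (k + l)) // s.card = l } = (k + l).choose l := by
  rw [Fintype.card_subtype, ← Finset.powerset_univ, ← Finset.powersetCard_eq_filter,
    Finset.card_powersetCard, ← Fintype.card, Fintype.card_fin]

set_option maxHeartbeats 1000000 in
lemma part3 (k : ℕ) (x : ℝ) (hx : 0 < x) :
    |iteratedDeriv k psi x| ≤ Real.exp x / (k + 1) := by
  have hxlt : (‖x‖₊ : ℝ≥0∞) < p.radius := by rw [radius_top]; exact ENNReal.coe_lt_top
  have hco : HasFPowerSeriesOnBall psi (p.changeOrigin x) x ⊤ := by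
    have h := hfp.changeOrigin (y := x) ENNReal.coe_lt_top
    simpa [ENNReal.top_sub_coe] using h
  have hfact := hco.factorial_smul (1 : ℝ) k
  have hid : iteratedDeriv k psi x = (k.factorial : ℝ) * ((p.changeOrigin x) k fun _ => 1) := by
    rw [iteratedDeriv_eq_iteratedFDeriv, ← hfact, nsmul_eq_mul]
  have h1 : |(p.changeOrigin x) k fun _ => 1| ≤ ‖p.changeOrigin x k‖ := by
    have h := (p.changeOrigin x k).le_opNorm (fun _ => (1 : ℝ))
    simpa [Real.norm_eq_abs] using h
  set T : (Σ l : ℕ, { s : Finset (Fin (k + l)) // s.card = l }) → ℝ :=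
    fun s => ‖p (k + s.1)‖ * x ^ s.1 with hT
  have hcoe : ∀ s : (Σ l : ℕ, { s : Finset (Fin (k + l)) // s.card = l }),
      ((‖p (k + s.1)‖₊ * ‖x‖₊ ^ s.1 : ℝ≥0) : ℝ) = T s := by
    intro s
    simp [hT, NNReal.coe_mul, Real.norm_eq_abs, abs_of_pos hx]
  have hsummT : Summable T := by
    have h := p.changeOriginSeries_summable_aux₂ hxlt k
    have h' := NNReal.summable_coe.mpr h
    exact h'.congr hcoe
  have h2 : ‖p.changeOrigin x k‖ ≤ ∑' s, T s := by
    have h := NNReal.coe_le_coe.mpr (p.nnnorm_changeOrigin_le k hxlt)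
    rw [NNReal.coe_tsum] at h
    calc ‖p.changeOrigin x k‖ = ((‖p.changeOrigin x k‖₊ : ℝ)) := (coe_nnnorm _).symm
      _ ≤ ∑' s, ((‖p (k + s.1)‖₊ * ‖x‖₊ ^ s.1 : ℝ≥0) : ℝ) := h
      _ = ∑' s, T s := tsum_congr hcoe
  have h3 : ∑' s, T s = ∑' l : ℕ, ((k + l).choose l : ℝ) * (‖p (k + l)‖ * x ^ l) := by
    rw [Summable.tsum_sigma hsummT]
    apply tsum_congr
    intro l
    rw [tsum_fintype]
    simp only [hT]
    exact (Finset.sum_const (s := (Finset.univ : Finset { s : Finset (Fin (k + l)) // s.card = l }))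
      (‖p (k + l)‖ * x ^ l)).trans (by rw [Finset.card_univ, card_subtype k l, nsmul_eq_mul])
  have hterm : ∀ l : ℕ, (k.factorial : ℝ) * (((k + l).choose l : ℝ) * (‖p (k + l)‖ * x ^ l))
      ≤ x ^ l / l.factorial * (1 / (k + 1)) := by
    intro l
    have hcl : ‖p (k + l)‖ ≤ (((k + l + 1).factorial : ℝ))⁻¹ := by
      rw [norm_p]; exact abs_c_le (k + l)
    have hnat2 : k.factorial * ((k + l).choose l) * l.factorial * (k + 1)
        ≤ (k + l + 1).factorial := by
      have h := Nat.choose_mul_factorial_mul_factorial (Nat.le_add_left l k)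
      have h' : (k + l).choose l * l.factorial * k.factorial = (k + l).factorial := by
        simpa using h
      calc k.factorial * ((k + l).choose l) * l.factorial * (k + 1)
          = ((k + l).choose l * l.factorial * k.factorial) * (k + 1) := by ring
        _ = (k + l).factorial * (k + 1) := by rw [h']
        _ ≤ (k + l).factorial * (k + l + 1) := by
            exact Nat.mul_le_mul_left _ (by omega)
        _ = (k + l + 1).factorial := by rw [Nat.factorial_succ]; ring
    have hineq : (k.factorial : ℝ) * ((k + l).choose l) * l.factorial * (k + 1)
        ≤ ((k + l + 1).factorial : ℝ) := by exact_mod_cast hnat2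
    have step1 : (k.factorial : ℝ) * (((k + l).choose l : ℝ) * (‖p (k + l)‖ * x ^ l))
        ≤ (k.factorial : ℝ) * (((k + l).choose l : ℝ) * ((((k + l + 1).factorial : ℝ))⁻¹ * x ^ l)) := by
      gcongr
    refine step1.trans ?_
    have e1 : (k.factorial : ℝ) * (((k + l).choose l : ℝ) * ((((k + l + 1).factorial : ℝ))⁻¹ * x ^ l))
        = ((k.factorial : ℝ) * ((k + l).choose l) * x ^ l) / ((k + l + 1).factorial : ℝ) := by
      ring
    have e2 : x ^ l / l.factorial * (1 / (k + 1)) = x ^ l / ((l.factorial : ℝ) * (k + 1)) := by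
      rw [div_mul_div_comm, mul_one]
    rw [e1, e2, div_le_div_iff₀ (by positivity) (by positivity)]
    have hx' : (0:ℝ) ≤ x ^ l := by positivity
    nlinarith [mul_le_mul_of_nonneg_left hineq hx']
  have hsum_rhs : Summable (fun l : ℕ => x ^ l / l.factorial * (1 / (k + 1))) :=
    (Real.summable_pow_div_factorial x).mul_right _
  have hsum_lhs : Summable
      (fun l : ℕ => (k.factorial : ℝ) * (((k + l).choose l : ℝ) * (‖p (k + l)‖ * x ^ l))) :=
    Summable.of_nonneg_of_le (fun l => by positivity) hterm hsum_rhs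
  have hkfac : (0:ℝ) ≤ (k.factorial : ℝ) := by positivity
  calc |iteratedDeriv k psi x|
      = (k.factorial : ℝ) * |(p.changeOrigin x) k fun _ => 1| := by
        rw [hid, abs_mul, abs_of_nonneg hkfac]
    _ ≤ (k.factorial : ℝ) * ‖p.changeOrigin x k‖ := by gcongr
    _ ≤ (k.factorial : ℝ) * ∑' s, T s := by gcongr
    _ = (k.factorial : ℝ) * ∑' l : ℕ, ((k + l).choose l : ℝ) * (‖p (k + l)‖ * x ^ l) := by
        rw [h3]
    _ = ∑' l : ℕ, (k.factorial : ℝ) * (((k + l).choose l : ℝ) * (‖p (k + l)‖ * x ^ l)) :=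
        tsum_mul_left.symm
    _ ≤ ∑' l : ℕ, x ^ l / l.factorial * (1 / (k + 1)) :=
        Summable.tsum_le_tsum hterm hsum_lhs hsum_rhs
    _ = (∑' l : ℕ, x ^ l / (l.factorial : ℝ)) * (1 / (k + 1)) := tsum_mul_right
    _ = Real.exp x / (k + 1) := by rw [(hasSum_exp x).tsum_eq]; ring

end PsiAux

theorem stmt_4 :
    (∀ x : ℝ, AnalyticAt ℝ psi x) ∧
    (∀ x : ℝ, psi x = ∑' n : ℕ, x ^ (2*n) / ((2*n+1).factorial : ℝ)) ∧
    (∀ k : ℕ, ∀ x : ℝ, 0 < x →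
      |iteratedDeriv k psi x| ≤ Real.exp x / (k+1)) := by
  exact ⟨PsiAux.analytic, PsiAux.part2, PsiAux.part3⟩
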